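/- Let G be a finite induced subgraph of the unit distance graph of (ℝⁿ, ‖·‖), with vertex set V ⊆ ℝⁿ. Then m₁(ℝⁿ, ‖·‖) ≤ α(G)/|V|, where α(G) is the independence number of G. -/

import Mathlib

open MeasureTheory Filter Set Pointwise

noncomputable def box (n : ℕ) (R : ℝ) : Set (Fin n → ℝ) := {x | ∀ i, |x i| ≤ R}

noncomputable def density (n : ℕ) (A : Set (Fin n → ℝ)) : ℝ :=
  Filter.limsup (fun R : ℝ =>
    (volume (A ∩ box n R)).toReal / (volume (box n R)).toReal) Filter.atTop

def AvoidsOne (n : ℕ) (N : (Fin n → ℝ) → ℝ) (A : Set (Fin n → ℝ)) : Prop :=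
  ∀ x ∈ A, ∀ y ∈ A, N (x - y) ≠ 1

noncomputable def m1 (n : ℕ) (N : (Fin n → ℝ) → ℝ) : ℝ :=
  sSup {d : ℝ | ∃ A : Set (Fin n → ℝ), MeasurableSet A ∧ AvoidsOne n N A ∧ d = density n A}

noncomputable def polyNorm (n : ℕ) (P : Set (Fin n → ℝ)) (x : Fin n → ℝ) : ℝ :=
  sInf {l : ℝ | 0 ≤ l ∧ x ∈ l • P}

def IsSymmPolytope (n : ℕ) (P : Set (Fin n → ℝ)) : Prop :=
  Convex ℝ P ∧ (∀ x ∈ P, -x ∈ P) ∧ ∃ F : Finset (Fin n → ℝ), P = convexHull ℝ (↑F : Set (Fin n → ℝ))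

def TilesBy (n : ℕ) (P : Set (Fin n → ℝ)) (Λ : Set (Fin n → ℝ)) : Prop :=
  (⋃ l ∈ Λ, (l +ᵥ P)) = Set.univ ∧
  (Λ.Pairwise fun a b => interior (a +ᵥ P) ∩ interior (b +ᵥ P) = ∅)


lemma box_eq' (n : ℕ) (R : ℝ) : box n R = Set.pi Set.univ (fun _ => Icc (-R) R) := by
  ext x; simp only [box, mem_setOf_eq, Set.mem_univ_pi, mem_Icc, abs_le]

lemma volume_box' (n : ℕ) {R : ℝ} (hR : 0 ≤ R) :
    volume (box n R) = ENNReal.ofReal ((2*R)^n) := by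
  rw [box_eq', volume_pi_pi, ENNReal.ofReal_pow (by linarith : (0:ℝ) ≤ 2*R)]
  simp [Real.volume_Icc]; ring_nf
  rw [ENNReal.ofReal_mul hR, mul_pow, ENNReal.ofReal_ofNat]

lemma key_ineq' (n : ℕ) (N : (Fin n → ℝ) → ℝ) (V : Finset (Fin n → ℝ)) (a : ℕ)
    (ha : ∀ k ∈ {k : ℕ | ∃ S ⊆ V, (∀ x ∈ S, ∀ y ∈ S, N (x - y) ≠ 1) ∧ S.card = k}, k ≤ a)
    (A : Set (Fin n → ℝ)) (hA : MeasurableSet A) (hAv : AvoidsOne n N A)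
    (M R : ℝ) (hM : ∀ v ∈ V, ∀ i, |v i| ≤ M) :
    (V.card : ENNReal) * volume (A ∩ box n R) ≤ (a : ENNReal) * volume (box n (R + M)) := by
  classical
  set B : (Fin n → ℝ) → Set (Fin n → ℝ) := fun v => (fun x => x + v) ⁻¹' A with hB
  have hmeas : ∀ v, MeasurableSet (B v) := fun v => hA.preimage (measurable_add_const v)
  have hstep : ∀ v ∈ V, volume (A ∩ box n R) ≤ volume (B v ∩ box n (R + M)) := by
    intro v hv
    have hsub : (fun x => x + v) ⁻¹' (A ∩ box n R) ⊆ B v ∩ box n (R + M) := by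
      rintro x ⟨h1, h2⟩
      refine ⟨h1, fun i => ?_⟩
      have h3 := h2 i
      have h4 := hM v hv i
      have : x i = (x i + v i) - v i := by ring
      calc |x i| = |(x i + v i) - v i| := by rw [← this]
        _ ≤ |x i + v i| + |v i| := abs_sub _ _
        _ ≤ R + M := add_le_add h3 h4
    calc volume (A ∩ box n R) = volume ((fun x => x + v) ⁻¹' (A ∩ box n R)) :=
          (measure_preimage_add_right volume v _).symm
      _ ≤ _ := measure_mono hsub
  set μ := volume.restrict (box n (R + M)) with hμ
  have hres : ∀ v, volume (B v ∩ box n (R + M)) = μ (B v) := fun v =>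
    (Measure.restrict_apply (hmeas v)).symm
  have hsum : ∑ v ∈ V, μ (B v) ≤ (a : ENNReal) * volume (box n (R + M)) := by
    calc ∑ v ∈ V, μ (B v) = ∑ v ∈ V, ∫⁻ x, (B v).indicator 1 x ∂μ :=
          Finset.sum_congr rfl fun v _ => (lintegral_indicator_one (hmeas v)).symm
      _ = ∫⁻ x, ∑ v ∈ V, (B v).indicator 1 x ∂μ :=
          (lintegral_finset_sum _ fun v _ => measurable_one.indicator (hmeas v)).symm
      _ ≤ ∫⁻ _, (a : ENNReal) ∂μ := by
          refine lintegral_mono fun x => ?_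
          have hcard : (V.filter (fun v => x + v ∈ A)).card ≤ a := by
            refine ha _ ⟨V.filter (fun v => x + v ∈ A), Finset.filter_subset _ _, ?_, rfl⟩
            intro v hv w hw
            simp only [Finset.mem_filter] at hv hw
            have h := hAv (x + v) hv.2 (x + w) hw.2
            have he : (x + v) - (x + w) = v - w := by abel
            rwa [he] at h
          calc ∑ v ∈ V, (B v).indicator 1 x
              = ∑ v ∈ V, (if x + v ∈ A then (1 : ENNReal) else 0) := by
                refine Finset.sum_congr rfl fun v _ => ?_
                simp [Set.indicator_apply, hB, Set.mem_preimage]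
            _ = ((V.filter (fun v => x + v ∈ A)).card : ENNReal) := by
                rw [Finset.sum_boole]
            _ ≤ (a : ENNReal) := by exact_mod_cast Nat.cast_le.2 hcard
      _ = (a : ENNReal) * volume (box n (R + M)) := by
          rw [lintegral_const, hμ, Measure.restrict_apply_univ]
  calc (V.card : ENNReal) * volume (A ∩ box n R) = ∑ _v ∈ V, volume (A ∩ box n R) := by
        rw [Finset.sum_const, nsmul_eq_mul]
    _ ≤ ∑ v ∈ V, volume (B v ∩ box n (R + M)) := Finset.sum_le_sum hstep
    _ = ∑ v ∈ V, μ (B v) := Finset.sum_congr rfl fun v _ => hres v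
    _ ≤ _ := hsum

lemma density_le_aux' (n : ℕ) (A : Set (Fin n → ℝ)) (a : ℕ) (V : Finset (Fin n → ℝ))
    (hV : V.Nonempty) (M : ℝ) (hM0 : 0 ≤ M)
    (hkey : ∀ R : ℝ, 0 ≤ R →
      (V.card : ENNReal) * volume (A ∩ box n R) ≤ (a : ENNReal) * volume (box n (R + M))) :
    density n A ≤ (a : ℝ) / V.card := by
  set c : ℝ := (a : ℝ) / V.card with hc
  have hVpos : (0 : ℝ) < V.card := by exact_mod_cast hV.card_pos
  set f : ℝ → ℝ := fun R => (volume (A ∩ box n R)).toReal / (volume (box n R)).toReal with hf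
  set g : ℝ → ℝ := fun R => c * ((R + M) / R)^n with hg
  have hbound : ∀ᶠ R in atTop, f R ≤ g R := by
    filter_upwards [eventually_gt_atTop 0] with R hR
    have hR0 : (0:ℝ) ≤ R := hR.le
    have hRM : (0:ℝ) ≤ R + M := by linarith
    have h1 := hkey R hR0
    rw [volume_box' n hRM] at h1
    have hfin : (a : ENNReal) * ENNReal.ofReal ((2*(R+M))^n) ≠ ⊤ :=
      ENNReal.mul_ne_top (ENNReal.natCast_ne_top a) ENNReal.ofReal_ne_top
    have h2 : (V.card : ℝ) * (volume (A ∩ box n R)).toReal ≤ (a : ℝ) * (2*(R+M))^n := by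
      have := ENNReal.toReal_mono hfin h1
      rwa [ENNReal.toReal_mul, ENNReal.toReal_mul, ENNReal.toReal_natCast,
        ENNReal.toReal_natCast, ENNReal.toReal_ofReal (by positivity)] at this
    have hvb : (volume (box n R)).toReal = (2*R)^n := by
      rw [volume_box' n hR0, ENNReal.toReal_ofReal (by positivity)]
    have h2Rpos : (0:ℝ) < (2*R)^n := by positivity
    show (volume (A ∩ box n R)).toReal / (volume (box n R)).toReal ≤ c * ((R + M) / R)^n
    rw [hvb, div_le_iff₀ h2Rpos]
    have hgoal : c * ((R + M) / R)^n * (2*R)^n = (a : ℝ) * (2*(R+M))^n / V.card := by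
      rw [hc, div_pow, mul_pow, mul_pow]
      field_simp
    rw [hgoal, le_div_iff₀ hVpos]
    calc (volume (A ∩ box n R)).toReal * V.card
        = (V.card : ℝ) * (volume (A ∩ box n R)).toReal := by ring
      _ ≤ (a : ℝ) * (2*(R+M))^n := h2
  have hgtend : Tendsto g atTop (nhds c) := by
    have h1 : Tendsto (fun R : ℝ => (R + M) / R) atTop (nhds 1) := by
      have h2 : Tendsto (fun R : ℝ => 1 + M / R) atTop (nhds (1 + 0)) :=
        tendsto_const_nhds.add (tendsto_const_nhds.div_atTop tendsto_id)
      rw [add_zero] at h2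
      refine h2.congr' ?_
      filter_upwards [eventually_ne_atTop (0:ℝ)] with R hR
      field_simp
    have h3 : Tendsto g atTop (nhds (c * 1^n)) := (h1.pow n).const_mul c
    simpa using h3
  have hf0 : ∀ R, 0 ≤ f R := fun R => by positivity
  calc density n A = limsup f atTop := rfl
    _ ≤ limsup g atTop := limsup_le_limsup hbound
        (isCoboundedUnder_le_of_le atTop (x := 0) hf0) hgtend.isBoundedUnder_le
    _ = c := hgtend.limsup_eq

theorem m1_le_independence_ratio_of_finite_subgraph
    (n : ℕ) (N : (Fin n → ℝ) → ℝ)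
    (hN0 : ∀ x, 0 ≤ N x) (hNdef : ∀ x, N x = 0 ↔ x = 0)
    (hNsmul : ∀ (c : ℝ) (x), N (c • x) = |c| * N x)
    (hNadd : ∀ x y, N (x + y) ≤ N x + N y)
    (V : Finset (Fin n → ℝ)) (hV : V.Nonempty) (a : ℕ)
    (ha : IsGreatest
      {k : ℕ | ∃ S ⊆ V, (∀ x ∈ S, ∀ y ∈ S, N (x - y) ≠ 1) ∧ S.card = k} a) :
    m1 n N ≤ (a : ℝ) / V.card := by
  have hVpos : (0:ℝ) < V.card := by exact_mod_cast hV.card_pos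
  refine Real.sSup_le ?_ (by positivity)
  rintro d ⟨A, hA, hAv, rfl⟩
  set M : ℝ := ∑ v ∈ V, ‖v‖ with hMdef
  have hM0 : 0 ≤ M := Finset.sum_nonneg fun v _ => norm_nonneg v
  have hM : ∀ v ∈ V, ∀ i, |v i| ≤ M := by
    intro v hv i
    calc |v i| = ‖v i‖ := rfl
      _ ≤ ‖v‖ := norm_le_pi_norm v i
      _ ≤ M := Finset.single_le_sum (fun w _ => norm_nonneg w) hv
  exact density_le_aux' n A a V hV M hM0 fun R _ =>
    key_ineq' n N V a ha.2 A hA hAv M R hM
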